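/- Let t ≥ 1 be an integer, let α_1 < α_2 < … < α_t be real numbers, and let c_1, …, c_t be real numbers, not all zero. Then the function f(x) = Σ_{i=1}^{t} c_i x^{α_i}, defined for x > 0, has at most t-1 zeros in (0, ∞); that is, the set {x > 0 : f(x) = 0} has cardinality at most t-1. -/

import Mathlib

open Set

private lemma between_lemma16 (S T : Set ℝ) (hT : T.Finite)
    (h : ∀ a ∈ S, ∀ b ∈ S, a < b → ∃ u ∈ T, a < u ∧ u < b) :
    S.Finite ∧ S.ncard ≤ T.ncard + 1 := by
  set T' : Set EReal := ((fun x : ℝ => (x : EReal)) '' T) ∪ {⊤} with hT'def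
  have hT'fin : T'.Finite := (hT.image _).union (finite_singleton _)
  set ψ : ℝ → EReal := fun s => sInf {v ∈ T' | (s : EReal) < v} with hψdef
  have hmem : ∀ s : ℝ, ψ s ∈ {v ∈ T' | (s : EReal) < v} := by
    intro s
    have hne : {v ∈ T' | (s : EReal) < v}.Nonempty :=
      ⟨⊤, Or.inr rfl, EReal.coe_lt_top s⟩
    have hfin : {v ∈ T' | (s : EReal) < v}.Finite :=
      hT'fin.subset (fun v hv => hv.1)
    exact hne.csInf_mem hfin
  have key : ∀ a ∈ S, ∀ b ∈ S, a < b → ψ a < ψ b := by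
    intro a ha b hb hab
    obtain ⟨u, huT, hau, hub⟩ := h a ha b hb hab
    have h1 : ψ a ≤ (u : EReal) :=
      sInf_le ⟨Or.inl ⟨u, huT, rfl⟩, EReal.coe_lt_coe_iff.mpr hau⟩
    have h2 : (b : EReal) < ψ b := (hmem b).2
    exact lt_of_le_of_lt h1 (lt_trans (EReal.coe_lt_coe_iff.mpr hub) h2)
  have hinj : InjOn ψ S := by
    intro a ha b hb hab
    rcases lt_trichotomy a b with h1 | h1 | h1
    · exact absurd hab (ne_of_lt (key a ha b hb h1))
    · exact h1
    · exact absurd hab.symm (ne_of_lt (key b hb a ha h1))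
  have hsub : ψ '' S ⊆ T' := by
    rintro _ ⟨s, hs, rfl⟩
    exact (hmem s).1
  have hSfin : S.Finite := Finite.of_finite_image (hT'fin.subset hsub) hinj
  refine ⟨hSfin, ?_⟩
  calc S.ncard = (ψ '' S).ncard := (ncard_image_of_injOn hinj).symm
    _ ≤ T'.ncard := ncard_le_ncard hsub hT'fin
    _ ≤ ((fun x : ℝ => (x : EReal)) '' T).ncard + ({(⊤ : EReal)} : Set EReal).ncard :=
        ncard_union_le _ _
    _ ≤ T.ncard + 1 := by
        rw [ncard_singleton, ncard_image_of_injective _ (EReal.coe_injective)]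

private lemma main_lemma16 : ∀ (t : ℕ) (α : Fin t → ℝ), StrictMono α → ∀ c : Fin t → ℝ,
    (∃ i, c i ≠ 0) →
    {x : ℝ | 0 < x ∧ ∑ i, c i * x ^ α i = 0}.Finite ∧
    {x : ℝ | 0 < x ∧ ∑ i, c i * x ^ α i = 0}.ncard ≤ t - 1 := by
  intro t
  induction t with
  | zero => rintro α hα c ⟨i, hi⟩; exact absurd i.pos (by simp)
  | succ t ih =>
    intro α hα c hc
    set g : ℝ → ℝ := fun x => ∑ i, c i * x ^ (α i - α 0) with hg
    have hfactor : ∀ x : ℝ, 0 < x → ∑ i, c i * x ^ α i = x ^ (α 0) * g x := by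
      intro x hx
      rw [hg, Finset.mul_sum]
      refine Finset.sum_congr rfl fun i _ => ?_
      rw [show x ^ (α 0) * (c i * x ^ (α i - α 0)) =
          c i * (x ^ (α 0) * x ^ (α i - α 0)) by ring, ← Real.rpow_add hx]
      ring_nf
    have hSeq : {x : ℝ | 0 < x ∧ ∑ i, c i * x ^ α i = 0} = {x | 0 < x ∧ g x = 0} := by
      ext x
      simp only [mem_setOf_eq, and_congr_right_iff]
      intro hx
      rw [hfactor x hx]
      constructor
      · intro h
        rcases mul_eq_zero.mp h with h | h
        · exact absurd h (Real.rpow_pos_of_pos hx _).ne'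
        · exact h
      · intro h; rw [h, mul_zero]
    rw [hSeq]
    by_cases hcase : ∀ j : Fin t, c j.succ = 0
    · have hc0 : c 0 ≠ 0 := by
        obtain ⟨i, hi⟩ := hc
        rcases Fin.eq_zero_or_eq_succ i with rfl | ⟨j, rfl⟩
        · exact hi
        · exact absurd (hcase j) hi
      have hgconst : ∀ x : ℝ, g x = c 0 * x ^ (α 0 - α 0) := by
        intro x
        rw [hg]
        simp [Fin.sum_univ_succ, hcase]
      have : {x : ℝ | 0 < x ∧ g x = 0} = ∅ := by
        ext x
        simp only [mem_setOf_eq, mem_empty_iff_false, iff_false, not_and]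
        intro hx hgx
        rw [hgconst x, sub_self, Real.rpow_zero, mul_one] at hgx
        exact hc0 hgx
      rw [this]
      simp
    · push_neg at hcase
      obtain ⟨j0, hj0⟩ := hcase
      set c' : Fin t → ℝ := fun j => c j.succ * (α j.succ - α 0) with hc'def
      set β : Fin t → ℝ := fun j => α j.succ - α 0 - 1 with hβdef
      have hβ : StrictMono β := by
        intro a b hab
        have := hα (Fin.succ_lt_succ_iff.mpr hab)
        simp only [hβdef]
        linarith
      have hc' : ∃ j, c' j ≠ 0 :=
        ⟨j0, mul_ne_zero hj0 (ne_of_gt (sub_pos.mpr (hα (Fin.succ_pos j0))))⟩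
      obtain ⟨hTfin, hTcard⟩ := ih β hβ c' hc'
      set T := {x : ℝ | 0 < x ∧ ∑ j, c' j * x ^ β j = 0} with hTdef
      have hderiv : ∀ x : ℝ, 0 < x → HasDerivAt g (∑ j, c' j * x ^ β j) x := by
        intro x hx
        have h1 : HasDerivAt g (∑ i, c i * ((α i - α 0) * x ^ (α i - α 0 - 1))) x :=
          HasDerivAt.fun_sum fun i _ =>
            (Real.hasDerivAt_rpow_const (Or.inl hx.ne')).const_mul (c i)
        convert h1 using 1
        rw [Fin.sum_univ_succ, sub_self, zero_mul, mul_zero, zero_add]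
        exact Finset.sum_congr rfl fun j _ => by rw [hc'def, hβdef]; ring
      have hrolle : ∀ a ∈ {x : ℝ | 0 < x ∧ g x = 0}, ∀ b ∈ {x : ℝ | 0 < x ∧ g x = 0},
          a < b → ∃ u ∈ T, a < u ∧ u < b := by
        intro a ha b hb hab
        have hcont : ContinuousOn g (Icc a b) := fun x hx =>
          ((hderiv x (lt_of_lt_of_le ha.1 hx.1)).continuousAt).continuousWithinAt
        obtain ⟨u, hu, hdu⟩ :=
          exists_deriv_eq_zero hab hcont (ha.2.trans hb.2.symm)
        have hu0 : 0 < u := lt_trans ha.1 hu.1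
        refine ⟨u, ⟨hu0, ?_⟩, hu.1, hu.2⟩
        rw [← (hderiv u hu0).deriv, hdu]
      obtain ⟨hfin, hcard⟩ := between_lemma16 _ T hTfin hrolle
      have ht : 0 < t := j0.pos
      exact ⟨hfin, by omega⟩

theorem stmt16 (t : ℕ) (ht : 1 ≤ t) (α : Fin t → ℝ) (hα : StrictMono α)
    (c : Fin t → ℝ) (hc : ∃ i, c i ≠ 0) :
    {x : ℝ | 0 < x ∧ ∑ i, c i * x ^ α i = 0}.Finite ∧
    {x : ℝ | 0 < x ∧ ∑ i, c i * x ^ α i = 0}.ncard ≤ t - 1 := by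
  exact main_lemma16 t α hα c hc
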